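/- Let X ~ Binomial(n, p₀) and define H(p,x) = Pr(X > x) = Σ_{x < k ≤ n} C(n,k) p^k (1-p)^{n-k}. Then for all t ∈ (0,1), Pr(H(p₀, X) ≤ t) ≥ t; that is, H(p,x) is an upper confidence distribution for p₀. -/

import Mathlib

open MeasureTheory Set

/-- The upper tail of a Binomial(n,p) distribution beyond x:
H(p,x) = Pr(X > x) = Σ_{x < k ≤ n} C(n,k) p^k (1-p)^{n-k}. -/
noncomputable def binomUpper (n : ℕ) (p : ℝ) (x : ℕ) : ℝ :=
  ∑ k ∈ Finset.Ioc x n, (n.choose k : ℝ) * p ^ k * (1 - p) ^ (n - k)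

lemma binomUpper_anti (n : ℕ) (p : ℝ) (hp : p ∈ Set.Ioo (0:ℝ) 1) {x y : ℕ} (h : x ≤ y) :
    binomUpper n p y ≤ binomUpper n p x := by
  apply Finset.sum_le_sum_of_subset_of_nonneg
  · exact Finset.Ioc_subset_Ioc_left h
  · intro k _ _
    have h1 : (0:ℝ) ≤ p := le_of_lt hp.1
    have h2 : (0:ℝ) ≤ 1 - p := by linarith [hp.2]
    positivity

lemma binom_sum_one (n : ℕ) (p : ℝ) :
    ∑ k ∈ Finset.range (n+1), (n.choose k : ℝ) * p ^ k * (1 - p) ^ (n - k) = 1 := by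
  have := add_pow p (1 - p) n
  simp only [add_sub_cancel, one_pow] at this
  conv_rhs => rw [this]
  apply Finset.sum_congr rfl
  intro k _
  ring

/-- For X ~ Binomial(n,p₀), H(p₀,X) is stochastically dominated by
Uniform(0,1): Pr(H(p₀,X) ≤ t) ≥ t for all t ∈ (0,1), i.e. H is an upper CD. -/
theorem stmt6 {Ω : Type*} [MeasurableSpace Ω] (μ : Measure Ω) [IsProbabilityMeasure μ]
    (n : ℕ) (p₀ : ℝ) (hp : p₀ ∈ Set.Ioo (0:ℝ) 1) (X : Ω → ℕ)
    (hrange : ∀ ω, X ω ≤ n)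
    (hlaw : ∀ k, k ≤ n →
      μ {ω | X ω = k} = ENNReal.ofReal ((n.choose k : ℝ) * p₀ ^ k * (1 - p₀) ^ (n - k)))
    (t : ℝ) (ht : t ∈ Set.Ioo (0:ℝ) 1) :
    ENNReal.ofReal t ≤ μ {ω | binomUpper n p₀ (X ω) ≤ t} := by
  set f : ℕ → ℝ := fun k => (n.choose k : ℝ) * p₀ ^ k * (1 - p₀) ^ (n - k) with hf
  have hfpos : ∀ k, 0 ≤ f k := by
    intro k
    have h1 : (0:ℝ) ≤ p₀ := le_of_lt hp.1
    have h2 : (0:ℝ) ≤ 1 - p₀ := by linarith [hp.2]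
    positivity
  have hex : ∃ x, binomUpper n p₀ x ≤ t := by
    refine ⟨n, ?_⟩
    simp [binomUpper]
    exact le_of_lt ht.1
  set m := Nat.find hex with hmdef
  have hm : binomUpper n p₀ m ≤ t := Nat.find_spec hex
  have hmn : m ≤ n := Nat.find_le (by
    simp [binomUpper]; exact le_of_lt ht.1)
  rcases Nat.eq_zero_or_pos m with hm0 | hmpos
  · have : {ω | binomUpper n p₀ (X ω) ≤ t} = Set.univ := by
      ext ω
      simp only [Set.mem_setOf_eq, Set.mem_univ, iff_true]
      calc binomUpper n p₀ (X ω) ≤ binomUpper n p₀ 0 :=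
            binomUpper_anti n p₀ hp (Nat.zero_le _)
        _ ≤ t := by rw [← hm0]; exact hm
    rw [this, measure_univ]
    exact ENNReal.ofReal_le_one.mpr (le_of_lt ht.2)
  · obtain ⟨m', heq⟩ : ∃ m', m = m' + 1 := ⟨m - 1, by omega⟩
    rw [heq] at hm hmn
    have hm' : ¬ binomUpper n p₀ m' ≤ t := Nat.find_min hex (by omega : m' < m)
    have hm'n : m' ≤ n := by omega
    -- complement bound
    have hsub : {ω | binomUpper n p₀ (X ω) ≤ t}ᶜ ⊆ ⋃ k ∈ Finset.range (m'+1), {ω | X ω = k} := by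
      intro ω hω
      simp only [Set.mem_compl_iff, Set.mem_setOf_eq] at hω
      have hXlt : X ω < m' + 1 := by
        by_contra hge
        push_neg at hge
        exact hω (le_trans (binomUpper_anti n p₀ hp hge) hm)
      simp only [Set.mem_iUnion, Finset.mem_range]
      exact ⟨X ω, hXlt, rfl⟩
    have hcompl : μ {ω | binomUpper n p₀ (X ω) ≤ t}ᶜ ≤ ENNReal.ofReal (1 - t) := by
      calc μ {ω | binomUpper n p₀ (X ω) ≤ t}ᶜ
          ≤ μ (⋃ k ∈ Finset.range (m'+1), {ω | X ω = k}) := measure_mono hsub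
        _ ≤ ∑ k ∈ Finset.range (m'+1), μ {ω | X ω = k} := measure_biUnion_finset_le _ _
        _ = ∑ k ∈ Finset.range (m'+1), ENNReal.ofReal (f k) := by
            apply Finset.sum_congr rfl
            intro k hk
            exact hlaw k (by simp at hk; omega)
        _ = ENNReal.ofReal (∑ k ∈ Finset.range (m'+1), f k) :=
            (ENNReal.ofReal_sum_of_nonneg (fun k _ => hfpos k)).symm
        _ ≤ ENNReal.ofReal (1 - t) := by
            apply ENNReal.ofReal_le_ofReal
            have hsplit : ∑ k ∈ Finset.range (m'+1), f k + binomUpper n p₀ m' = 1 := by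
              have : Finset.range (m'+1) = Finset.Iic m' := by
                ext k; simp [Nat.lt_succ_iff]
              rw [this]
              rw [binomUpper, ← Finset.sum_union (by
                simp [Finset.disjoint_left]; omega)]
              have hu : Finset.Iic m' ∪ Finset.Ioc m' n = Finset.Iic n := by
                ext k; simp [Finset.mem_union]; omega
              rw [hu]
              have : Finset.Iic n = Finset.range (n+1) := by
                ext k; simp [Nat.lt_succ_iff]
              rw [this]
              exact binom_sum_one n p₀
            push_neg at hm'
            linarith
    have h1 : (1:ENNReal) ≤ μ {ω | binomUpper n p₀ (X ω) ≤ t} + ENNReal.ofReal (1 - t) := by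
      calc (1:ENNReal) = μ (Set.univ : Set Ω) := measure_univ.symm
        _ = μ ({ω | binomUpper n p₀ (X ω) ≤ t} ∪ {ω | binomUpper n p₀ (X ω) ≤ t}ᶜ) := by
            rw [Set.union_compl_self]
        _ ≤ μ {ω | binomUpper n p₀ (X ω) ≤ t} + μ {ω | binomUpper n p₀ (X ω) ≤ t}ᶜ :=
            measure_union_le _ _
        _ ≤ _ := add_le_add (le_refl _) hcompl
    have : ENNReal.ofReal t = 1 - ENNReal.ofReal (1 - t) := by
      rw [← ENNReal.ofReal_one, ← ENNReal.ofReal_sub _ (by linarith [ht.2])]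
      norm_num
    rw [this]
    exact tsub_le_iff_right.mpr h1
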